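/- Let ω > 0, d > 0, R > 0, let Γ ⊆ ℝ³ be a measurable set contained in the closed ball of radius R about the origin with finite two-dimensional Hausdorff measure μH²(Γ) < ∞, and let z ∈ ℝ³. There exists a constant C = C(ω, d, μH²(Γ)) such that for every ρ ∈ (0,1], setting κ = 1/ρ and Γ_ρ = {z + ρ y : y ∈ Γ}, for every measurable ν : ℝ³ → ℝ³ with ‖ν(y)‖ ≤ 1 for all y, every bounded measurable ψ : ℝ³ → ℂ with |ψ| ≤ K on Γ_ρ, and every x ∈ ℝ³ with ‖x − z‖ ≥ d + R, | ∫_{Γ_ρ} ( D_y Φ(x, y)[ν(y)] − i κ Φ(x, y) ) ψ(y) dμH²(y) | ≤ C ρ K, where Φ(x,y) = e^{iω‖x−y‖}/(4π‖x−y‖) and D_yΦ(x,y)[ν(y)] is the Fréchet derivative of Φ in its second variable applied to ν(y). -/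

import Mathlib

open MeasureTheory

/-- The outgoing fundamental solution `Φ(x,y) = e^{iω‖x−y‖}/(4π‖x−y‖)` of the
Helmholtz operator `−Δ−ω²` in `ℝ³`. -/
noncomputable def helmholtzKernel (ω : ℝ) (x y : EuclideanSpace ℝ (Fin 3)) : ℂ :=
  Complex.exp (Complex.I * ((ω * ‖x - y‖ : ℝ) : ℂ)) / ((4 * Real.pi * ‖x - y‖ : ℝ) : ℂ)

section Aux

open Real Complex

lemma helmholtz_norm_le (ω d : ℝ) (hd : 0 < d) (x y : EuclideanSpace ℝ (Fin 3))
    (hxy : d ≤ ‖x - y‖) : ‖helmholtzKernel ω x y‖ ≤ 1 / (4 * Real.pi * d) := by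
  have hπ : (0:ℝ) < Real.pi := Real.pi_pos
  have hr : (0:ℝ) < ‖x - y‖ := hd.trans_le hxy
  have h1 : ‖Complex.exp (Complex.I * ((ω * ‖x - y‖ : ℝ) : ℂ))‖ = 1 := by
    simp [Complex.norm_exp]
  rw [helmholtzKernel, norm_div, h1, Complex.norm_real, Real.norm_eq_abs,
    abs_of_pos (by positivity)]
  rw [div_le_div_iff₀ (by positivity) (by positivity)]
  nlinarith [hxy, hπ.le]

lemma helmholtz_fderiv_norm_le (ω d : ℝ) (hω : 0 < ω) (hd : 0 < d)
    (x y : EuclideanSpace ℝ (Fin 3)) (hxy : d ≤ ‖x - y‖) :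
    ‖fderiv ℝ (fun y' => helmholtzKernel ω x y') y‖
      ≤ ω / (4 * Real.pi * d) + 1 / (4 * Real.pi * d ^ 2) := by
  have hπ : (0:ℝ) < Real.pi := Real.pi_pos
  have hr : (0:ℝ) < ‖x - y‖ := hd.trans_le hxy
  have hxyne : x - y ≠ 0 := norm_pos_iff.mp hr
  set r : ℝ := ‖x - y‖ with hrdef
  -- the norm function
  set n : EuclideanSpace ℝ (Fin 3) → ℝ := fun y' => ‖x - y'‖ with hn
  have hdn : DifferentiableAt ℝ n y :=
    DifferentiableAt.norm ℝ ((differentiableAt_const x).sub differentiableAt_id) hxyne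
  have hnlip : LipschitzWith 1 n := by
    apply LipschitzWith.of_dist_le_mul
    intro a b
    simp only [hn, NNReal.coe_one, one_mul, Real.dist_eq]
    calc |‖x - a‖ - ‖x - b‖| ≤ ‖(x - a) - (x - b)‖ := abs_norm_sub_norm_le _ _
      _ = dist a b := by
          rw [show x - a - (x - b) = b - a from by abel, norm_sub_rev, ← dist_eq_norm]
  have hL1 : ‖fderiv ℝ n y‖ ≤ 1 := by
    simpa using norm_fderiv_le_of_lipschitz ℝ hnlip (x₀ := y)
  -- the radial function g
  set g : ℝ → ℂ := fun t => Complex.exp (Complex.I * ((ω * t : ℝ) : ℂ)) / ((4 * Real.pi * t : ℝ) : ℂ)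
    with hg
  set Ex : ℂ := Complex.exp (Complex.I * ((ω * r : ℝ) : ℂ)) with hEx
  have hnum : HasDerivAt (fun t : ℝ => Complex.exp (Complex.I * ((ω * t : ℝ) : ℂ)))
      (Ex * (Complex.I * (ω : ℂ))) r := by
    have hin : HasDerivAt (fun t : ℝ => Complex.I * ((ω * t : ℝ) : ℂ)) (Complex.I * (ω : ℂ)) r := by
      have h0 : HasDerivAt (fun t : ℝ => ((ω * t : ℝ) : ℂ)) (ω : ℂ) r := by
        have := (hasDerivAt_id r).const_mul ω
        simpa using this.ofReal_comp
      simpa using h0.const_mul Complex.I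
    exact hin.cexp
  have hden : HasDerivAt (fun t : ℝ => ((4 * Real.pi * t : ℝ) : ℂ)) ((4 * Real.pi : ℝ) : ℂ) r := by
    have := (hasDerivAt_id r).const_mul (4 * Real.pi)
    simpa using this.ofReal_comp
  have hdenne : ((4 * Real.pi * r : ℝ) : ℂ) ≠ 0 := by
    simp only [ne_eq, Complex.ofReal_eq_zero]
    positivity
  set g' : ℂ := (Ex * (Complex.I * (ω : ℂ)) * ((4 * Real.pi * r : ℝ) : ℂ)
      - Ex * ((4 * Real.pi : ℝ) : ℂ)) / ((4 * Real.pi * r : ℝ) : ℂ) ^ 2 with hg'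
  have hgd : HasDerivAt g g' r := hnum.div hden hdenne
  have hgF : HasFDerivAt g (ContinuousLinearMap.smulRight (1 : ℝ →L[ℝ] ℝ) g') r :=
    hasDerivAt_iff_hasFDerivAt.mp hgd
  have hcomp : HasFDerivAt (fun y' => helmholtzKernel ω x y')
      ((ContinuousLinearMap.smulRight (1 : ℝ →L[ℝ] ℝ) g').comp (fderiv ℝ n y)) y :=
    by have := hgF.comp y hdn.hasFDerivAt; exact this
  rw [hcomp.fderiv]
  have hEx1 : ‖Ex‖ = 1 := by simp [hEx, Complex.norm_exp]
  have hg'norm : ‖g'‖ ≤ ω / (4 * Real.pi * r) + 1 / (4 * Real.pi * r ^ 2) := by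
    rw [hg', norm_div, norm_pow]
    have h2 : ‖((4 * Real.pi * r : ℝ) : ℂ)‖ = 4 * Real.pi * r := by
      rw [Complex.norm_real, Real.norm_eq_abs, abs_of_pos (by positivity)]
    have h1 : ‖Ex * (Complex.I * (ω : ℂ)) * ((4 * Real.pi * r : ℝ) : ℂ)
        - Ex * ((4 * Real.pi : ℝ) : ℂ)‖ ≤ ω * (4 * Real.pi * r) + 4 * Real.pi := by
      refine (norm_sub_le _ _).trans ?_
      simp only [norm_mul, hEx1, Complex.norm_I, Complex.norm_real, Real.norm_eq_abs, one_mul]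
      simp only [abs_of_pos hω, abs_of_pos hπ, abs_of_pos hr,
        _root_.abs_of_nonneg (by norm_num : (0:ℝ) ≤ (4:ℝ))]
      nlinarith [hω.le, hπ.le, hr.le]
    have heq : (ω * (4 * Real.pi * r) + 4 * Real.pi) / (4 * Real.pi * r) ^ 2
        = ω / (4 * Real.pi * r) + 1 / (4 * Real.pi * r ^ 2) := by
      field_simp
    rw [h2, ← heq]
    gcongr
  have hmono : ω / (4 * Real.pi * r) + 1 / (4 * Real.pi * r ^ 2)
      ≤ ω / (4 * Real.pi * d) + 1 / (4 * Real.pi * d ^ 2) := by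
    gcongr <;> nlinarith
  calc ‖(ContinuousLinearMap.smulRight (1 : ℝ →L[ℝ] ℝ) g').comp (fderiv ℝ n y)‖
      ≤ ‖ContinuousLinearMap.smulRight (1 : ℝ →L[ℝ] ℝ) g'‖ * ‖fderiv ℝ n y‖ :=
        ContinuousLinearMap.opNorm_comp_le _ _
    _ ≤ ‖g'‖ * 1 := by
        have hsr : ‖ContinuousLinearMap.smulRight (1 : ℝ →L[ℝ] ℝ) g'‖ = ‖g'‖ := by
          rw [ContinuousLinearMap.norm_smulRight_apply]
          simp
        rw [hsr]
        exact mul_le_mul_of_nonneg_left hL1 (norm_nonneg _)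
    _ = ‖g'‖ := mul_one _
    _ ≤ ω / (4 * Real.pi * r) + 1 / (4 * Real.pi * r ^ 2) := hg'norm
    _ ≤ _ := hmono

end Aux

/-- `O(ρ)` bound for the combined double- and single-layer potential `DL − iκSL`
with coupling parameter `κ = ρ⁻¹` on the boundary `Γ_ρ = z + ρΓ` of a small obstacle,
at observation points `x` with `‖x − z‖ ≥ d + R`. -/
theorem small_obstacle_layer_potential_bound (ω d R : ℝ) (hω : 0 < ω) (hd : 0 < d)
    (hR : 0 < R)
    (Γ : Set (EuclideanSpace ℝ (Fin 3)))
    (hΓsub : Γ ⊆ Metric.closedBall (0 : EuclideanSpace ℝ (Fin 3)) R)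
    (hΓm : MeasurableSet Γ) (hΓf : μH[2] Γ < ⊤)
    (z : EuclideanSpace ℝ (Fin 3)) :
    ∃ C : ℝ, 0 < C ∧
      ∀ ρ : ℝ, 0 < ρ → ρ ≤ 1 →
        ∀ ν : EuclideanSpace ℝ (Fin 3) → EuclideanSpace ℝ (Fin 3), Measurable ν →
          (∀ y, ‖ν y‖ ≤ 1) →
        ∀ K : ℝ, 0 ≤ K →
        ∀ ψ : EuclideanSpace ℝ (Fin 3) → ℂ, Measurable ψ →
          Bornology.IsBounded (Set.range ψ) →
          (∀ y ∈ (fun y : EuclideanSpace ℝ (Fin 3) => z + ρ • y) '' Γ, ‖ψ y‖ ≤ K) →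
        ∀ x : EuclideanSpace ℝ (Fin 3), d + R ≤ ‖x - z‖ →
          ‖∫ y in (fun y : EuclideanSpace ℝ (Fin 3) => z + ρ • y) '' Γ,
              (fderiv ℝ (fun y' => helmholtzKernel ω x y') y (ν y)
                - Complex.I * ((ρ⁻¹ : ℝ) : ℂ) * helmholtzKernel ω x y) * ψ y ∂μH[2]‖
            ≤ C * ρ * K := by
  have hπ : (0:ℝ) < Real.pi := Real.pi_pos
  set M : ℝ := ω / (4 * Real.pi * d) + 1 / (4 * Real.pi * d ^ 2) + 1 / (4 * Real.pi * d)
    with hM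
  have hMpos : 0 < M := by positivity
  set μΓ : ℝ := (μH[2] Γ).toReal with hμΓ
  have hμΓ0 : 0 ≤ μΓ := ENNReal.toReal_nonneg
  refine ⟨M * (μΓ + 1), by positivity, ?_⟩
  intro ρ hρ hρ1 ν hνm hν K hK ψ hψm hψb hψK x hx
  set S : Set (EuclideanSpace ℝ (Fin 3)) := (fun y => z + ρ • y) '' Γ with hS
  -- measurability of S
  have hSm : MeasurableSet S := by
    have hSeq : S = (fun w => ρ⁻¹ • (w - z)) ⁻¹' Γ := by
      ext w
      simp only [hS, Set.mem_image, Set.mem_preimage]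
      constructor
      · rintro ⟨u, hu, rfl⟩
        have : ρ⁻¹ • (z + ρ • u - z) = u := by
          rw [add_sub_cancel_left, smul_smul, inv_mul_cancel₀ hρ.ne', one_smul]
        rwa [this]
      · intro hw
        refine ⟨ρ⁻¹ • (w - z), hw, ?_⟩
        rw [smul_smul, mul_inv_cancel₀ hρ.ne', one_smul, add_sub_cancel]
    rw [hSeq]
    exact ((measurable_id.sub_const z).const_smul ρ⁻¹) hΓm
  -- measure bound
  have hlip : LipschitzWith ρ.toNNReal (fun y : EuclideanSpace ℝ (Fin 3) => z + ρ • y) := by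
    apply LipschitzWith.of_dist_le_mul
    intro a b
    rw [dist_eq_norm, dist_eq_norm]
    have heq : z + ρ • a - (z + ρ • b) = ρ • (a - b) := by
      rw [smul_sub]; abel
    rw [heq, norm_smul, Real.norm_eq_abs, abs_of_pos hρ, Real.coe_toNNReal _ hρ.le]
  have hmeas : μH[2] S ≤ (ρ.toNNReal : ENNReal) ^ (2:ℝ) * μH[2] Γ :=
    hlip.hausdorffMeasure_image_le (by norm_num) Γ
  have hρ2 : ((ρ.toNNReal : ENNReal) ^ (2:ℝ)) = ENNReal.ofReal (ρ ^ 2) := by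
    rw [ENNReal.ofReal_pow hρ.le, ← ENNReal.rpow_natCast (ENNReal.ofReal ρ) 2]
    norm_num [ENNReal.ofReal]
  have hmeas' : μH[2] S ≤ ENNReal.ofReal (ρ ^ 2) * μH[2] Γ := by rwa [hρ2] at hmeas
  have hSfin : μH[2] S < ⊤ :=
    hmeas'.trans_lt (ENNReal.mul_lt_top ENNReal.ofReal_lt_top hΓf)
  have hSreal : (μH[2] S).toReal ≤ ρ ^ 2 * μΓ := by
    have := ENNReal.toReal_mono
      (ENNReal.mul_ne_top ENNReal.ofReal_ne_top hΓf.ne) hmeas'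
    rwa [ENNReal.toReal_mul, ENNReal.toReal_ofReal (by positivity)] at this
  have hρinv : (1:ℝ) ≤ ρ⁻¹ := by
    nlinarith [inv_pos.mpr hρ, mul_inv_cancel₀ hρ.ne']
  -- pointwise bound on S
  have hbound : ∀ y ∈ S, ‖(fderiv ℝ (fun y' => helmholtzKernel ω x y') y (ν y)
      - Complex.I * ((ρ⁻¹ : ℝ) : ℂ) * helmholtzKernel ω x y) * ψ y‖ ≤ ρ⁻¹ * M * K := by
    intro y hy
    obtain ⟨u, hu, rfl⟩ := hy
    have hunorm : ‖u‖ ≤ R := by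
      have := hΓsub hu
      simpa [Metric.mem_closedBall, dist_eq_norm] using this
    have hdist : d ≤ ‖x - (z + ρ • u)‖ := by
      have h1 : ‖x - z‖ - ‖ρ • u‖ ≤ ‖x - (z + ρ • u)‖ := by
        have heq : x - (z + ρ • u) = (x - z) - ρ • u := by abel
        rw [heq]
        exact norm_sub_norm_le _ _
      have h2 : ‖ρ • u‖ ≤ R := by
        rw [norm_smul, Real.norm_eq_abs, abs_of_pos hρ]
        calc ρ * ‖u‖ ≤ 1 * R :=
              mul_le_mul hρ1 hunorm (norm_nonneg _) zero_le_one
          _ = R := one_mul R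
      linarith
    have hψy : ‖ψ (z + ρ • u)‖ ≤ K := hψK _ ⟨u, hu, rfl⟩
    have hΦ := helmholtz_norm_le ω d hd x (z + ρ • u) hdist
    have hF := helmholtz_fderiv_norm_le ω d hω hd x (z + ρ • u) hdist
    have hterm : ‖fderiv ℝ (fun y' => helmholtzKernel ω x y') (z + ρ • u) (ν (z + ρ • u))
        - Complex.I * ((ρ⁻¹ : ℝ) : ℂ) * helmholtzKernel ω x (z + ρ • u)‖ ≤ ρ⁻¹ * M := by
      refine (norm_sub_le _ _).trans ?_
      have ha : ‖fderiv ℝ (fun y' => helmholtzKernel ω x y') (z + ρ • u) (ν (z + ρ • u))‖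
          ≤ ω / (4 * Real.pi * d) + 1 / (4 * Real.pi * d ^ 2) := by
        calc ‖fderiv ℝ (fun y' => helmholtzKernel ω x y') (z + ρ • u) (ν (z + ρ • u))‖
            ≤ ‖fderiv ℝ (fun y' => helmholtzKernel ω x y') (z + ρ • u)‖ * ‖ν (z + ρ • u)‖ :=
              ContinuousLinearMap.le_opNorm _ _
          _ ≤ (ω / (4 * Real.pi * d) + 1 / (4 * Real.pi * d ^ 2)) * 1 :=
              mul_le_mul hF (hν _) (norm_nonneg _) (by positivity)
          _ = _ := mul_one _
      have hb : ‖Complex.I * ((ρ⁻¹ : ℝ) : ℂ) * helmholtzKernel ω x (z + ρ • u)‖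
          ≤ ρ⁻¹ * (1 / (4 * Real.pi * d)) := by
        rw [norm_mul, norm_mul, Complex.norm_I, one_mul, Complex.norm_real,
          Real.norm_eq_abs, abs_of_pos (by positivity)]
        exact mul_le_mul_of_nonneg_left hΦ (by positivity)
      have hM1 : ω / (4 * Real.pi * d) + 1 / (4 * Real.pi * d ^ 2)
          ≤ ρ⁻¹ * (ω / (4 * Real.pi * d) + 1 / (4 * Real.pi * d ^ 2)) := by
        nlinarith [hρinv,
          (by positivity : (0:ℝ) < ω / (4 * Real.pi * d) + 1 / (4 * Real.pi * d ^ 2))]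
      calc _ ≤ (ω / (4 * Real.pi * d) + 1 / (4 * Real.pi * d ^ 2))
            + ρ⁻¹ * (1 / (4 * Real.pi * d)) := by linarith
        _ ≤ ρ⁻¹ * (ω / (4 * Real.pi * d) + 1 / (4 * Real.pi * d ^ 2))
            + ρ⁻¹ * (1 / (4 * Real.pi * d)) := by linarith
        _ = ρ⁻¹ * M := by rw [hM]; ring
    rw [norm_mul]
    exact mul_le_mul hterm hψy (norm_nonneg _) (by positivity)
  -- conclude
  have hint := norm_setIntegral_le_of_norm_le_const_ae' (μ := μH[2]) (s := S) hSfin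
    (Filter.Eventually.of_forall hbound)
  refine hint.trans ?_
  have hstep : ρ⁻¹ * M * K * (μH[2] S).toReal ≤ ρ⁻¹ * M * K * (ρ ^ 2 * μΓ) :=
    mul_le_mul_of_nonneg_left hSreal (by positivity)
  refine hstep.trans ?_
  have heq : ρ⁻¹ * M * K * (ρ ^ 2 * μΓ) = M * μΓ * ρ * K := by
    field_simp
  rw [heq]
  have : M * μΓ * ρ * K ≤ M * (μΓ + 1) * ρ * K := by
    apply mul_le_mul_of_nonneg_right _ hK
    apply mul_le_mul_of_nonneg_right _ hρ.le
    nlinarith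
  exact this
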